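/- Let σ be an involution and |ψ⟩ a unit vector. With the alternative RBM parameters W = arctan(e^{2κ}) - π/4 and b = sπ/4 (s = sign(κ)), the success probability P_s = ⟨ψ|cos²(Wσ + bI)|ψ⟩ equals 1 - 1/(1 + e^{4sκ}) - tanh(2sκ)·α, where α = ⟨ψ|(I+σ)/2|ψ⟩. -/

import Mathlib

open Matrix

/-- Alternative RBM weight `W(κ) = arctan(e^{2κ}) - π/4`. -/
noncomputable def Wparam2 (κ : ℝ) : ℝ := Real.arctan (Real.exp (2 * κ)) - Real.pi / 4

/-- Alternative RBM bias `b(κ) = sign(κ) π/4`. -/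
noncomputable def bparam2 (κ : ℝ) : ℝ := Real.sign κ * (Real.pi / 4)

/-- `cos(Wσ + bI)` for an involution `σ`, via functional calculus:
since `σ² = I`, `f(Wσ+bI) = ((f(b+W)+f(b-W))/2) I + ((f(b+W)-f(b-W))/2) σ`. -/
noncomputable def opCos {d : ℕ} (W b : ℝ) (σ : Matrix (Fin d) (Fin d) ℂ) :
    Matrix (Fin d) (Fin d) ℂ :=
  (((Real.cos (b + W) + Real.cos (b - W)) / 2 : ℝ) : ℂ) • (1 : Matrix (Fin d) (Fin d) ℂ) +
    (((Real.cos (b + W) - Real.cos (b - W)) / 2 : ℝ) : ℂ) • σ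

lemma tanh_formula (y : ℝ) : Real.tanh y = (Real.exp (2*y) - 1) / (Real.exp (2*y) + 1) := by
  rw [Real.tanh_eq_sinh_div_cosh, Real.sinh_eq, Real.cosh_eq, Real.exp_neg]
  have h : Real.exp (2*y) = Real.exp y * Real.exp y := by rw [two_mul, Real.exp_add]
  have h0 : Real.exp y ≠ 0 := (Real.exp_pos y).ne'
  have h1 : Real.exp (2*y) + 1 ≠ 0 := by positivity
  field_simp [h]
  rw [h]; ring

-- scalar identities
lemma key1 (κ : ℝ) (hκ : κ ≠ 0) :
    ((Real.cos (bparam2 κ + Wparam2 κ) + Real.cos (bparam2 κ - Wparam2 κ)) / 2)^2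
      + ((Real.cos (bparam2 κ + Wparam2 κ) - Real.cos (bparam2 κ - Wparam2 κ)) / 2)^2
    = 1 - 1 / (1 + Real.exp (4 * Real.sign κ * κ)) - Real.tanh (2 * Real.sign κ * κ) / 2 := by
  set t := Real.exp (2 * κ) with ht
  have ht0 : 0 < t := Real.exp_pos _
  have h2 : 1 + t^2 ≠ 0 := by positivity
  rcases hκ.lt_or_gt with h | h
  · have hs : Real.sign κ = -1 := Real.sign_of_neg h
    have hb : bparam2 κ + Wparam2 κ = Real.arctan t - Real.pi/2 := by
      simp only [bparam2, Wparam2, hs]; ring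
    have hb' : bparam2 κ - Wparam2 κ = -Real.arctan t := by
      simp only [bparam2, Wparam2, hs]; ring
    have ht4 : t^2 = Real.exp (4*κ) := by rw [sq, ht, ← Real.exp_add]; ring_nf
    have he : Real.exp (4 * Real.sign κ * κ) = (t^2)⁻¹ := by
      rw [hs, ht4, ← Real.exp_neg]; ring_nf
    have htanh : Real.tanh (2 * Real.sign κ * κ) = ((t^2)⁻¹ - 1)/((t^2)⁻¹ + 1) := by
      rw [tanh_formula]
      congr 1 <;> rw [ht4, hs, ← Real.exp_neg] <;> ring_nf
    rw [hb, hb', Real.cos_neg, show Real.arctan t - Real.pi/2 = -(Real.pi/2 - Real.arctan t) by ring,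
      Real.cos_neg, Real.cos_pi_div_two_sub, Real.sin_arctan, Real.cos_arctan, he, htanh]
    have hs2 : Real.sqrt (1 + t^2) ^ 2 = 1 + t^2 := Real.sq_sqrt (by positivity)
    have hs0 : Real.sqrt (1 + t^2) ≠ 0 := by positivity
    have ht2 : (t:ℝ)^2 ≠ 0 := by positivity
    have h3 : (t^2)⁻¹ + 1 ≠ 0 := by positivity
    have h4 : 1 + (t^2)⁻¹ ≠ 0 := by positivity
    field_simp
    rw [hs2]; ring
  · have hs : Real.sign κ = 1 := Real.sign_of_pos h
    have hb : bparam2 κ + Wparam2 κ = Real.arctan t := by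
      simp only [bparam2, Wparam2, hs]; ring
    have hb' : bparam2 κ - Wparam2 κ = Real.pi/2 - Real.arctan t := by
      simp only [bparam2, Wparam2, hs]; ring
    have ht4 : t^2 = Real.exp (4*κ) := by rw [sq, ht, ← Real.exp_add]; ring_nf
    have he : Real.exp (4 * Real.sign κ * κ) = t^2 := by
      rw [hs, ht4]; ring_nf
    have htanh : Real.tanh (2 * Real.sign κ * κ) = (t^2 - 1)/(t^2 + 1) := by
      rw [tanh_formula]
      congr 1 <;> rw [ht4, hs] <;> ring_nf
    rw [hb, hb', Real.cos_pi_div_two_sub, Real.sin_arctan, Real.cos_arctan, he, htanh]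
    have hs2 : Real.sqrt (1 + t^2) ^ 2 = 1 + t^2 := Real.sq_sqrt (by positivity)
    have hs0 : Real.sqrt (1 + t^2) ≠ 0 := by positivity
    have h3 : t^2 + 1 ≠ 0 := by positivity
    field_simp
    rw [hs2]; ring

lemma key2 (κ : ℝ) (hκ : κ ≠ 0) :
    2 * ((Real.cos (bparam2 κ + Wparam2 κ) + Real.cos (bparam2 κ - Wparam2 κ)) / 2)
      * ((Real.cos (bparam2 κ + Wparam2 κ) - Real.cos (bparam2 κ - Wparam2 κ)) / 2)
    = - (Real.tanh (2 * Real.sign κ * κ) / 2) := by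
  set t := Real.exp (2 * κ) with ht
  have ht0 : 0 < t := Real.exp_pos _
  have h2 : 1 + t^2 ≠ 0 := by positivity
  have hs2 : Real.sqrt (1 + t^2) ^ 2 = 1 + t^2 := Real.sq_sqrt (by positivity)
  have hs0 : Real.sqrt (1 + t^2) ≠ 0 := by positivity
  have ht4 : t^2 = Real.exp (4*κ) := by rw [sq, ht, ← Real.exp_add]; ring_nf
  rcases hκ.lt_or_gt with h | h
  · have hs : Real.sign κ = -1 := Real.sign_of_neg h
    have hb : bparam2 κ + Wparam2 κ = Real.arctan t - Real.pi/2 := by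
      simp only [bparam2, Wparam2, hs]; ring
    have hb' : bparam2 κ - Wparam2 κ = -Real.arctan t := by
      simp only [bparam2, Wparam2, hs]; ring
    have ht2 : (t:ℝ)^2 ≠ 0 := by positivity
    have h3 : (t^2)⁻¹ + 1 ≠ 0 := by positivity
    have htanh : Real.tanh (2 * Real.sign κ * κ) = ((t^2)⁻¹ - 1)/((t^2)⁻¹ + 1) := by
      rw [tanh_formula]
      congr 1 <;> rw [ht4, hs, ← Real.exp_neg] <;> ring_nf
    rw [hb, hb', Real.cos_neg, show Real.arctan t - Real.pi/2 = -(Real.pi/2 - Real.arctan t) by ring,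
      Real.cos_neg, Real.cos_pi_div_two_sub, Real.sin_arctan, Real.cos_arctan, htanh]
    field_simp
    linear_combination (1-t^2) * hs2
  · have hs : Real.sign κ = 1 := Real.sign_of_pos h
    have hb : bparam2 κ + Wparam2 κ = Real.arctan t := by
      simp only [bparam2, Wparam2, hs]; ring
    have hb' : bparam2 κ - Wparam2 κ = Real.pi/2 - Real.arctan t := by
      simp only [bparam2, Wparam2, hs]; ring
    have h3 : t^2 + 1 ≠ 0 := by positivity
    have htanh : Real.tanh (2 * Real.sign κ * κ) = (t^2 - 1)/(t^2 + 1) := by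
      rw [tanh_formula]
      congr 1 <;> rw [ht4, hs] <;> ring_nf
    rw [hb, hb', Real.cos_pi_div_two_sub, Real.sin_arctan, Real.cos_arctan, htanh]
    field_simp
    linear_combination (t^2-1) * hs2


/-- With the alternative parameters, `P_s = ⟨ψ|cos²(Wσ+bI)|ψ⟩
= 1 - 1/(1+e^{4sκ}) - tanh(2sκ) α`, where `α = ⟨ψ|(I+σ)/2|ψ⟩`. -/
theorem rbm_success_probability_alt {d : ℕ} (κ : ℝ) (hκ : κ ≠ 0)
    (σ : Matrix (Fin d) (Fin d) ℂ) (hherm : σ.IsHermitian) (hinv : σ * σ = 1)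
    (ψ : Fin d → ℂ) (hψ : star ψ ⬝ᵥ ψ = 1) :
    star ψ ⬝ᵥ ((opCos (Wparam2 κ) (bparam2 κ) σ * opCos (Wparam2 κ) (bparam2 κ) σ) *ᵥ ψ) =
      1 - ((1 / (1 + Real.exp (4 * Real.sign κ * κ)) : ℝ) : ℂ) -
        ((Real.tanh (2 * Real.sign κ * κ) : ℝ) : ℂ) *
          (star ψ ⬝ᵥ (((2 : ℂ)⁻¹ • ((1 : Matrix (Fin d) (Fin d) ℂ) + σ)) *ᵥ ψ)) := by
  set c : ℝ := (Real.cos (bparam2 κ + Wparam2 κ) + Real.cos (bparam2 κ - Wparam2 κ)) / 2 with hc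
  set e : ℝ := (Real.cos (bparam2 κ + Wparam2 κ) - Real.cos (bparam2 κ - Wparam2 κ)) / 2 with he
  have hsq : opCos (Wparam2 κ) (bparam2 κ) σ * opCos (Wparam2 κ) (bparam2 κ) σ
      = ((c^2 + e^2 : ℝ) : ℂ) • (1 : Matrix (Fin d) (Fin d) ℂ) + ((2*c*e : ℝ) : ℂ) • σ := by
    simp only [opCos, ← hc, ← he, mul_add, add_mul, Matrix.smul_mul, Matrix.mul_smul,
      smul_smul, one_mul, mul_one, hinv]
    push_cast
    module
  rw [hsq]
  have hz : ∀ (x y : ℂ), star ψ ⬝ᵥ ((x • (1 : Matrix (Fin d) (Fin d) ℂ) + y • σ) *ᵥ ψ)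
      = x + y * (star ψ ⬝ᵥ σ *ᵥ ψ) := by
    intro x y
    rw [Matrix.add_mulVec, dotProduct_add, Matrix.smul_mulVec, Matrix.smul_mulVec,
      Matrix.one_mulVec, dotProduct_smul, dotProduct_smul, hψ]
    simp [smul_eq_mul]
  rw [hz]
  have hz2 : star ψ ⬝ᵥ (((2 : ℂ)⁻¹ • ((1 : Matrix (Fin d) (Fin d) ℂ) + σ)) *ᵥ ψ)
      = (2:ℂ)⁻¹ + (2:ℂ)⁻¹ * (star ψ ⬝ᵥ σ *ᵥ ψ) := by
    rw [show (2 : ℂ)⁻¹ • ((1 : Matrix (Fin d) (Fin d) ℂ) + σ)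
        = (2:ℂ)⁻¹ • (1 : Matrix (Fin d) (Fin d) ℂ) + (2:ℂ)⁻¹ • σ by rw [smul_add], hz]
  rw [hz2]
  have h1 := key1 κ hκ  -- need key1 here
  have h2 := key2 κ hκ
  have h1' : ((c^2 + e^2 : ℝ) : ℂ) = 1 - ((1 / (1 + Real.exp (4 * Real.sign κ * κ)) : ℝ) : ℂ)
      - ((Real.tanh (2 * Real.sign κ * κ) : ℝ) : ℂ) / 2 := by
    exact_mod_cast congrArg (fun x : ℝ => (x : ℂ)) h1
  have h2' : ((2*c*e : ℝ) : ℂ) = -(((Real.tanh (2 * Real.sign κ * κ) : ℝ) : ℂ) / 2) := by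
    exact_mod_cast congrArg (fun x : ℝ => (x : ℂ)) h2
  rw [h1', h2']; ring
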